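/- Define w(z) = z[f^+(z), f^-(z)] and s^±(z) = z[f^-(z^{±1}), f^+(z^{∓1})], where f^± are the Jost solutions. Then w(z) w(z^{-1}) + (z − z^{-1})² = s^±(z) s^±(z^{-1}) for all z ∈ ℂ∖{0}. -/

import Mathlib

/-- The modified Wronskian `[f,g]ₙ = aₙ (f(n) g(n+1) − f(n+1) g(n))`. -/
def modWron (a : ℤ → ℝ) (f g : ℤ → ℂ) (n : ℤ) : ℂ :=
  (a n : ℂ) * (f n * g (n + 1) - f (n + 1) * g n)

lemma wron_const (a b : ℤ → ℝ) (lam : ℂ) (f g : ℤ → ℂ)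
    (hf : ∀ n : ℤ, (a (n - 1) : ℂ) * f (n - 1) + (a n : ℂ) * f (n + 1) + (b n : ℂ) * f n
        = lam * f n)
    (hg : ∀ n : ℤ, (a (n - 1) : ℂ) * g (n - 1) + (a n : ℂ) * g (n + 1) + (b n : ℂ) * g n
        = lam * g n) :
    ∀ n m : ℤ, modWron a f g n = modWron a f g m := by
  have step : ∀ n : ℤ, modWron a f g (n + 1) = modWron a f g n := by
    intro n
    have hf1 := hf (n + 1)
    have hg1 := hg (n + 1)
    simp only [add_sub_cancel_right] at hf1 hg1
    simp only [modWron]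
    linear_combination f (n + 1) * hg1 - g (n + 1) * hf1
  have key : ∀ n : ℤ, modWron a f g n = modWron a f g 0 := by
    intro n
    induction n using Int.induction_on with
    | zero => rfl
    | succ k ih => rw [step, ih]
    | pred k ih =>
      have := step (-(k : ℤ) - 1)
      simp only [sub_add_cancel] at this
      rw [← this, ih]
  intro n m; rw [key n, key m]

/-- With `w(z) = z[f⁺(z), f⁻(z)]` and `s^±(z) = z[f⁻(z^{±1}), f⁺(z^{∓1})]`, one has
`w(z) w(z⁻¹) + (z − z⁻¹)² = s^±(z) s^±(z⁻¹)`. -/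
theorem w_s_identity (a b : ℤ → ℝ) (Nm Np : ℤ)
    (ha : ∀ n, 0 < a n)
    (hasupp : ∀ n, n < Nm ∨ Np ≤ n → a n = 1)
    (hbsupp : ∀ n, n < Nm ∨ Np < n → b n = 0)
    (fp fm : ℂ → ℤ → ℂ)
    (hfp : ∀ z : ℂ, z ≠ 0 → ∀ n : ℤ,
      (a (n - 1) : ℂ) * fp z (n - 1) + (a n : ℂ) * fp z (n + 1) + (b n : ℂ) * fp z n
        = (z + z⁻¹) * fp z n)
    (hfpbc : ∀ z : ℂ, z ≠ 0 → ∀ n : ℤ, Np ≤ n → fp z n = z ^ n)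
    (hfm : ∀ z : ℂ, z ≠ 0 → ∀ n : ℤ,
      (a (n - 1) : ℂ) * fm z (n - 1) + (a n : ℂ) * fm z (n + 1) + (b n : ℂ) * fm z n
        = (z + z⁻¹) * fm z n)
    (hfmbc : ∀ z : ℂ, z ≠ 0 → ∀ n : ℤ, n ≤ Nm → fm z n = z ^ (-n)) :
    ∀ z : ℂ, z ≠ 0 → ∀ n : ℤ,
      (z * modWron a (fp z) (fm z) n) * (z⁻¹ * modWron a (fp z⁻¹) (fm z⁻¹) n)
          + (z - z⁻¹) ^ 2
        = (z * modWron a (fm z⁻¹) (fp z) n) * (z⁻¹ * modWron a (fm z) (fp z⁻¹) n) ∧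
      (z * modWron a (fp z) (fm z) n) * (z⁻¹ * modWron a (fp z⁻¹) (fm z⁻¹) n)
          + (z - z⁻¹) ^ 2
        = (z * modWron a (fm z) (fp z⁻¹) n) * (z⁻¹ * modWron a (fm z⁻¹) (fp z) n) := by
  intro z hz n
  have hz' : (z⁻¹ : ℂ) ≠ 0 := inv_ne_zero hz
  have hzz : z * z⁻¹ = 1 := mul_inv_cancel₀ hz
  -- the recurrences with the common spectral parameter z + z⁻¹
  have hfpz := hfp z hz
  have hfmz := hfm z hz
  have hfpz' : ∀ m : ℤ, (a (m - 1) : ℂ) * fp z⁻¹ (m - 1) + (a m : ℂ) * fp z⁻¹ (m + 1)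
      + (b m : ℂ) * fp z⁻¹ m = (z + z⁻¹) * fp z⁻¹ m := by
    intro m
    have := hfp z⁻¹ hz' m
    rwa [inv_inv, add_comm z⁻¹ z] at this
  have hfmz' : ∀ m : ℤ, (a (m - 1) : ℂ) * fm z⁻¹ (m - 1) + (a m : ℂ) * fm z⁻¹ (m + 1)
      + (b m : ℂ) * fm z⁻¹ m = (z + z⁻¹) * fm z⁻¹ m := by
    intro m
    have := hfm z⁻¹ hz' m
    rwa [inv_inv, add_comm z⁻¹ z] at this
  -- W13 is constant, equal to z⁻¹ - z
  have hW13 : modWron a (fp z) (fp z⁻¹) n = z⁻¹ - z := by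
    rw [wron_const a b (z + z⁻¹) _ _ hfpz hfpz' n Np]
    have hnp : (a Np : ℂ) = 1 := by rw [hasupp Np (Or.inr le_rfl)]; norm_num
    rw [modWron, hnp, hfpbc z hz Np le_rfl, hfpbc z hz (Np + 1) (by omega),
      hfpbc z⁻¹ hz' Np le_rfl, hfpbc z⁻¹ hz' (Np + 1) (by omega),
      inv_zpow', inv_zpow', ← zpow_add₀ hz Np (-(Np + 1)), ← zpow_add₀ hz (Np + 1) (-Np),
      show Np + -(Np + 1) = -1 by ring, show Np + 1 + -Np = 1 by ring,
      zpow_neg, zpow_one, one_mul]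
  -- W24 is constant, equal to z - z⁻¹
  have hW24 : modWron a (fm z) (fm z⁻¹) n = z - z⁻¹ := by
    rw [wron_const a b (z + z⁻¹) _ _ hfmz hfmz' n (Nm - 1)]
    have hnm : (a (Nm - 1) : ℂ) = 1 := by rw [hasupp (Nm - 1) (Or.inl (by omega))]; norm_num
    rw [modWron, hnm, hfmbc z hz (Nm - 1) (by omega), hfmbc z hz (Nm - 1 + 1) (by omega),
      hfmbc z⁻¹ hz' (Nm - 1) (by omega), hfmbc z⁻¹ hz' (Nm - 1 + 1) (by omega),
      inv_zpow', inv_zpow', neg_neg, neg_neg,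
      ← zpow_add₀ hz (-(Nm - 1)) (Nm - 1 + 1), ← zpow_add₀ hz (-(Nm - 1 + 1)) (Nm - 1),
      show -(Nm - 1) + (Nm - 1 + 1) = 1 by ring, show -(Nm - 1 + 1) + (Nm - 1) = -1 by ring,
      zpow_neg, zpow_one, one_mul]
  -- Plücker identity
  have pluck : modWron a (fp z) (fm z) n * modWron a (fp z⁻¹) (fm z⁻¹) n
      + modWron a (fp z) (fm z⁻¹) n * modWron a (fm z) (fp z⁻¹) n
      = modWron a (fp z) (fp z⁻¹) n * modWron a (fm z) (fm z⁻¹) n := by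
    simp only [modWron]; ring
  rw [hW13, hW24] at pluck
  have anti : modWron a (fm z⁻¹) (fp z) n = -modWron a (fp z) (fm z⁻¹) n := by
    simp only [modWron]; ring
  constructor
  · rw [anti]
    linear_combination z * z⁻¹ * pluck - (z - z⁻¹) ^ 2 * hzz
  · rw [anti]
    linear_combination z * z⁻¹ * pluck - (z - z⁻¹) ^ 2 * hzz
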